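/- (Detectability of replay attacks under watermarking.) Let F, S, H, K1, K̂, B, K be real n×n matrices with K̂ = K1 + F·H and S = I − H, and let κ, μ > 0 satisfy ‖exp(s·F)‖ ≤ κ·e^{−μ·s} for all s ≥ 0. Let w, ρ : ℝ → ℝⁿ with w continuous, ρ continuously differentiable, ‖w(t)‖ ≤ w̄, ‖ρ(t)‖ ≤ ρ̄ for all t, and let δ : ℝ → ℝⁿ be continuously differentiable. Let T_a ∈ ℝ, T > 0, and let ε : ℝ → ℝⁿ be differentiable and satisfy, for all t ≥ T_a, ε̇(t) = F·ε(t) + S·(w(t−T) + B·K·ρ(t−T)) − K1·(ρ(t−T) + δ(t)) − H·(ρ̇(t−T) + δ̇(t)). Let ē_{T_a} ≥ 0 and define ē(t) = κ·e^{−μ(t−T_a)}·(ē_{T_a} + ‖H‖·ρ̄) + ‖H‖·ρ̄ + ∫_{T_a}^{t} κ·e^{−μ(t−τ)}·(‖S‖·w̄ + ‖S·B·K − K̂‖·ρ̄) dτ, and r̄(t) = ē(t) + ρ̄. Assume ‖ε(T_a) + H·δ(T_a)‖ ≤ ē_{T_a}. If for some T_d with T_a ≤ T_d < T_a + T it holds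 that ‖S·δ(T_d) − ∫_{T_a}^{T_d} exp((T_d−τ)·F)·K̂·δ(τ) dτ‖ > 2·r̄(T_d), then the residual r(t) = ε(t) + ρ(t−T) + δ(t) satisfies ‖r(T_d)‖ > r̄(T_d); that is, the replay attack is detected at time T_d. -/

import Mathlib

set_option maxHeartbeats 1000000
set_option synthInstance.maxHeartbeats 200000

open NormedSpace intervalIntegral

noncomputable instance clmRatNormedAlgebra {E : Type*} [NormedAddCommGroup E] [NormedSpace ℝ E] :
    NormedAlgebra ℚ (E →L[ℝ] E) := NormedAlgebra.restrictScalars ℚ ℝ _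

/-- Variation of constants formula for a linear ODE `e' = A e + f` on `[a, ∞)`. -/
lemma varconst {E : Type*} [NormedAddCommGroup E] [NormedSpace ℝ E] [CompleteSpace E]
    (A : E →L[ℝ] E) (a : ℝ) (f : ℝ → E) (hf : Continuous f)
    (e : ℝ → E) (he : ∀ t, a ≤ t → HasDerivAt e (A (e t) + f t) t)
    (t : ℝ) (ht : a ≤ t) :
    e t = (NormedSpace.exp ((t - a) • A)) (e a)
        + ∫ τ in a..t, (NormedSpace.exp ((t - τ) • A)) (f τ) := by
  have hMc : Continuous fun s : ℝ => NormedSpace.exp ((a - s) • A) :=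
    exp_continuous.comp ((continuous_const.sub continuous_id).smul continuous_const)
  have hM : ∀ s : ℝ, HasDerivAt (fun u : ℝ => NormedSpace.exp ((a - u) • A))
      (-(NormedSpace.exp ((a - s) • A) * A)) s := by
    intro s
    have h1 : HasDerivAt (fun u : ℝ => a - u) (-1 : ℝ) s := by
      simpa using (hasDerivAt_id s).const_sub a
    have h2 := hasDerivAt_exp_smul_const (𝕂 := ℝ) A (a - s)
    have h3 := h2.scomp s h1
    exact h3.congr_deriv (by simp [neg_smul, one_smul])
  have hg : ∀ s, a ≤ s → HasDerivAt (fun u : ℝ => (NormedSpace.exp ((a - u) • A)) (e u))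
      ((NormedSpace.exp ((a - s) • A)) (f s)) s := by
    intro s hs
    have := (hM s).clm_apply (he s hs)
    convert this using 1
    simp [ContinuousLinearMap.mul_apply, map_add]
  have hint : IntervalIntegrable (fun τ => (NormedSpace.exp ((a - τ) • A)) (f τ))
      MeasureTheory.volume a t := (hMc.clm_apply hf).intervalIntegrable _ _
  have hFTC : (∫ τ in a..t, (NormedSpace.exp ((a - τ) • A)) (f τ))
      = (NormedSpace.exp ((a - t) • A)) (e t) - e a := by
    have := intervalIntegral.integral_eq_sub_of_hasDerivAt (a := a) (b := t)
      (f := fun u : ℝ => (NormedSpace.exp ((a - u) • A)) (e u))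
      (f' := fun u : ℝ => (NormedSpace.exp ((a - u) • A)) (f u))
      (fun x hx => hg x (by rw [Set.uIcc_of_le ht] at hx; exact hx.1)) hint
    simpa using this
  -- key commuting exp identity
  have key : ∀ c : ℝ, (NormedSpace.exp ((t - a) • A)) * (NormedSpace.exp ((a - c) • A))
      = NormedSpace.exp ((t - c) • A) := by
    intro c
    rw [← NormedSpace.exp_add_of_commute (((Commute.refl A).smul_left (t - a)).smul_right (a - c))]
    congr 1
    rw [← add_smul]
    congr 1
    ring
  have hPg : (NormedSpace.exp ((t - a) • A)) ((NormedSpace.exp ((a - t) • A)) (e t)) = e t := by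
    rw [← ContinuousLinearMap.mul_apply, key t]
    simp [NormedSpace.exp_zero]
  have := congrArg (fun v => (NormedSpace.exp ((t - a) • A)) v) hFTC
  rw [← (NormedSpace.exp ((t - a) • A)).intervalIntegral_comp_comm hint, map_sub, hPg] at this
  have hintgr : (∫ τ in a..t, (NormedSpace.exp ((t - a) • A)) ((NormedSpace.exp ((a - τ) • A)) (f τ)))
      = ∫ τ in a..t, (NormedSpace.exp ((t - τ) • A)) (f τ) := by
    apply intervalIntegral.integral_congr
    intro τ _
    show (NormedSpace.exp ((t - a) • A)) ((NormedSpace.exp ((a - τ) • A)) (f τ))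
        = (NormedSpace.exp ((t - τ) • A)) (f τ)
    rw [← ContinuousLinearMap.mul_apply, key τ]
  rw [hintgr] at this
  rw [this]
  abel


/-- **Detectability of replay attacks under watermarking (Statement 4,
Proposition 2).**
Matrices are continuous linear maps on Euclidean space (so `‖·‖` is the
operator norm induced by the Euclidean norm), with matrix product `*` and
identity `1`. Assume `Khat = K1 + F·H`, `S = I − H`, `κ, μ > 0` with
`‖exp(s F)‖ ≤ κ e^{−μ s}` for `s ≥ 0`, bounded noises, `T > 0`, the
watermarked error dynamics for `t ≥ T_a`, and the stealthiness condition
`‖ε(T_a) + H δ(T_a)‖ ≤ ebarTa`. If at some `T_d ∈ [T_a, T_a + T)`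
`‖S δ(T_d) − ∫_{T_a}^{T_d} exp((T_d−τ) F) Khat δ(τ) dτ‖ > 2 rbar(T_d)`,
then the residual `r(t) = ε(t) + ρ(t−T) + δ(t)` satisfies
`‖r(T_d)‖ > rbar(T_d)`, i.e. the replay attack is detected at `T_d`. -/
theorem replay_attack_detectable {n : ℕ}
    (F S H K1 Khat B K : EuclideanSpace ℝ (Fin n) →L[ℝ] EuclideanSpace ℝ (Fin n))
    (hKhat : Khat = K1 + F * H) (hS : S = 1 - H)
    (κ μ : ℝ) (hκ : 0 < κ) (hμ : 0 < μ)
    (hFdecay : ∀ s : ℝ, 0 ≤ s → ‖NormedSpace.exp (s • F)‖ ≤ κ * Real.exp (-μ * s))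
    (w ρ ρ' δ δ' : ℝ → EuclideanSpace ℝ (Fin n))
    (wbar ρbar : ℝ)
    (hw : Continuous w)
    (hρ : ∀ t : ℝ, HasDerivAt ρ (ρ' t) t) (hρ' : Continuous ρ')
    (hδ : ∀ t : ℝ, HasDerivAt δ (δ' t) t) (hδ' : Continuous δ')
    (hwbound : ∀ t : ℝ, ‖w t‖ ≤ wbar)
    (hρbound : ∀ t : ℝ, ‖ρ t‖ ≤ ρbar)
    (T_a T : ℝ) (hT : 0 < T)
    (ε : ℝ → EuclideanSpace ℝ (Fin n))
    (hode : ∀ t : ℝ, T_a ≤ t →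
      HasDerivAt ε
        (F (ε t) + S (w (t - T) + (B * K) (ρ (t - T)))
          - K1 (ρ (t - T) + δ t) - H (ρ' (t - T) + δ' t)) t)
    (ebarTa : ℝ) (hebarTa : 0 ≤ ebarTa)
    (ebar rbar : ℝ → ℝ)
    (hebar : ∀ t : ℝ, ebar t =
      κ * Real.exp (-μ * (t - T_a)) * (ebarTa + ‖H‖ * ρbar) + ‖H‖ * ρbar
      + ∫ τ in T_a..t,
          κ * Real.exp (-μ * (t - τ)) * (‖S‖ * wbar + ‖S * B * K - Khat‖ * ρbar))
    (hrbar : ∀ t : ℝ, rbar t = ebar t + ρbar)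
    (hinit : ‖ε T_a + H (δ T_a)‖ ≤ ebarTa)
    (T_d : ℝ) (hTd1 : T_a ≤ T_d) (hTd2 : T_d < T_a + T)
    (hdetect :
      ‖S (δ T_d)
        - ∫ τ in T_a..T_d, (NormedSpace.exp ((T_d - τ) • F)) (Khat (δ τ))‖
        > 2 * rbar T_d) :
    ‖ε T_d + ρ (T_d - T) + δ T_d‖ > rbar T_d := by
  have hρc : Continuous ρ := continuous_iff_continuousAt.mpr fun t => (hρ t).continuousAt
  have hδc : Continuous δ := continuous_iff_continuousAt.mpr fun t => (hδ t).continuousAt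
  have hρbar0 : 0 ≤ ρbar := le_trans (norm_nonneg _) (hρbound 0)
  have hwbar0 : 0 ≤ wbar := le_trans (norm_nonneg _) (hwbound 0)
  set N := S * B * K - Khat with hNdef
  -- the shifted error and forcing
  set f : ℝ → EuclideanSpace ℝ (Fin n) :=
    fun τ => S (w (τ - T)) + N (ρ (τ - T)) - Khat (δ τ) with hfdef
  have hfc : Continuous f :=
    ((S.continuous.comp (hw.comp (continuous_id.sub continuous_const))).add
      (N.continuous.comp (hρc.comp (continuous_id.sub continuous_const)))).sub
      (Khat.continuous.comp hδc)
  have hode' : ∀ t : ℝ, T_a ≤ t →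
      HasDerivAt (fun u : ℝ => ε u + H (δ u) + H (ρ (u - T)))
        (F (ε t + H (δ t) + H (ρ (t - T))) + f t) t := by
    intro t htt
    have h1 := hode t htt
    have h2 : HasDerivAt (fun u => H (δ u)) (H (δ' t)) t :=
      H.hasFDerivAt.comp_hasDerivAt t (hδ t)
    have h3 : HasDerivAt (fun u : ℝ => ρ (u - T)) (ρ' (t - T)) t := by
      exact (hρ (t - T)).comp_sub_const t T
    have h4 : HasDerivAt (fun u : ℝ => H (ρ (u - T))) (H (ρ' (t - T))) t :=
      H.hasFDerivAt.comp_hasDerivAt t h3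
    have h5 := (h1.add h2).add h4
    refine h5.congr_deriv ?_
    simp only [hfdef, hNdef, hKhat, hS, ContinuousLinearMap.sub_apply,
      ContinuousLinearMap.add_apply, ContinuousLinearMap.mul_apply,
      ContinuousLinearMap.one_apply, map_add, map_sub]
    abel
  have hrep := varconst F T_a f hfc (fun u : ℝ => ε u + H (δ u) + H (ρ (u - T)))
    hode' T_d hTd1
  -- split the integral
  set g1 : ℝ → EuclideanSpace ℝ (Fin n) :=
    fun τ => (NormedSpace.exp ((T_d - τ) • F)) (S (w (τ - T)) + N (ρ (τ - T))) with hg1def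
  set g2 : ℝ → EuclideanSpace ℝ (Fin n) :=
    fun τ => (NormedSpace.exp ((T_d - τ) • F)) (Khat (δ τ)) with hg2def
  have hexpc : Continuous fun τ : ℝ => NormedSpace.exp ((T_d - τ) • F) :=
    NormedSpace.exp_continuous.comp ((continuous_const.sub continuous_id).smul continuous_const)
  have hg1c : Continuous g1 := hexpc.clm_apply
    ((S.continuous.comp (hw.comp (continuous_id.sub continuous_const))).add
      (N.continuous.comp (hρc.comp (continuous_id.sub continuous_const))))
  have hg2c : Continuous g2 := hexpc.clm_apply (Khat.continuous.comp hδc)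
  have hg1int : IntervalIntegrable g1 MeasureTheory.volume T_a T_d :=
    hg1c.intervalIntegrable _ _
  have hg2int : IntervalIntegrable g2 MeasureTheory.volume T_a T_d :=
    hg2c.intervalIntegrable _ _
  have hsplit : (∫ τ in T_a..T_d, (NormedSpace.exp ((T_d - τ) • F)) (f τ))
      = (∫ τ in T_a..T_d, g1 τ) - ∫ τ in T_a..T_d, g2 τ := by
    rw [← intervalIntegral.integral_sub hg1int hg2int]
    apply intervalIntegral.integral_congr
    intro τ _
    show (NormedSpace.exp ((T_d - τ) • F)) (f τ) = g1 τ - g2 τ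
    rw [hfdef, hg1def, hg2def]
    simp only [map_sub]
  rw [hsplit] at hrep
  -- bound ‖e T_d + ∫ g2‖
  have hEnn : (0:ℝ) ≤ κ * Real.exp (-μ * (T_d - T_a)) := by positivity
  have hbP : ‖(NormedSpace.exp ((T_d - T_a) • F)) (ε T_a + H (δ T_a) + H (ρ (T_a - T)))‖
      ≤ κ * Real.exp (-μ * (T_d - T_a)) * (ebarTa + ‖H‖ * ρbar) := by
    have h2 : ‖ε T_a + H (δ T_a) + H (ρ (T_a - T))‖ ≤ ebarTa + ‖H‖ * ρbar :=
      (norm_add_le _ _).trans (add_le_add hinit ((H.le_opNorm _).trans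
        (mul_le_mul_of_nonneg_left (hρbound _) (norm_nonneg H))))
    exact ((NormedSpace.exp ((T_d - T_a) • F)).le_opNorm _).trans
      (mul_le_mul (hFdecay _ (by linarith)) h2 (norm_nonneg _) hEnn)
  have hbI : ‖∫ τ in T_a..T_d, g1 τ‖
      ≤ ∫ τ in T_a..T_d, κ * Real.exp (-μ * (T_d - τ)) * (‖S‖ * wbar + ‖N‖ * ρbar) := by
    have hboundint : IntervalIntegrable
        (fun τ => κ * Real.exp (-μ * (T_d - τ)) * (‖S‖ * wbar + ‖N‖ * ρbar))
        MeasureTheory.volume T_a T_d :=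
      (((continuous_const.mul (Real.continuous_exp.comp
        (continuous_const.mul (continuous_const.sub continuous_id)))).mul
        continuous_const)).intervalIntegrable _ _
    have hae : ∀ᵐ τ ∂(MeasureTheory.volume.restrict (Set.uIoc T_a T_d)),
        ‖g1 τ‖ ≤ κ * Real.exp (-μ * (T_d - τ)) * (‖S‖ * wbar + ‖N‖ * ρbar) := by
      apply MeasureTheory.ae_restrict_of_forall_mem measurableSet_uIoc
      intro τ hτ
      rw [Set.uIoc_of_le hTd1] at hτ
      have hτ2 : (0:ℝ) ≤ T_d - τ := by linarith [hτ.2]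
      have hv : ‖S (w (τ - T)) + N (ρ (τ - T))‖ ≤ ‖S‖ * wbar + ‖N‖ * ρbar :=
        (norm_add_le _ _).trans (add_le_add
          ((S.le_opNorm _).trans (mul_le_mul_of_nonneg_left (hwbound _) (norm_nonneg S)))
          ((N.le_opNorm _).trans (mul_le_mul_of_nonneg_left (hρbound _) (norm_nonneg N))))
      exact ((NormedSpace.exp ((T_d - τ) • F)).le_opNorm _).trans
        (mul_le_mul (hFdecay _ hτ2) hv (norm_nonneg _) (by positivity))
    have := intervalIntegral.norm_integral_le_abs_of_norm_le hae hboundint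
    rwa [abs_of_nonneg (intervalIntegral.integral_nonneg hTd1 fun τ _ => by positivity)] at this
  have hE : ‖(ε T_d + H (δ T_d) + H (ρ (T_d - T))) + ∫ τ in T_a..T_d, g2 τ‖
      ≤ ebar T_d - ‖H‖ * ρbar := by
    have heq : (ε T_d + H (δ T_d) + H (ρ (T_d - T))) + ∫ τ in T_a..T_d, g2 τ
        = (NormedSpace.exp ((T_d - T_a) • F)) (ε T_a + H (δ T_a) + H (ρ (T_a - T)))
          + ∫ τ in T_a..T_d, g1 τ := by
      rw [hrep]; abel
    rw [heq, hebar T_d]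
    calc ‖_ + _‖ ≤ _ := norm_add_le _ _
      _ ≤ _ := add_le_add hbP hbI
      _ ≤ _ := by rw [hNdef]; linarith
  -- final triangle inequality
  have hSnorm : ‖S‖ ≤ 1 + ‖H‖ := by
    rw [hS]
    refine (norm_sub_le _ _).trans (add_le_add_left ?_ _)
    simpa [ContinuousLinearMap.one_def] using
      (ContinuousLinearMap.norm_id_le (E := EuclideanSpace ℝ (Fin n)))
  have hSρ : ‖S (ρ (T_d - T))‖ ≤ (1 + ‖H‖) * ρbar :=
    (S.le_opNorm _).trans (mul_le_mul hSnorm (hρbound _) (norm_nonneg _)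
      (by positivity))
  have keyeq : S (δ T_d) - (∫ τ in T_a..T_d, g2 τ)
      = (ε T_d + ρ (T_d - T) + δ T_d)
        - ((ε T_d + H (δ T_d) + H (ρ (T_d - T))) + ∫ τ in T_a..T_d, g2 τ)
        - S (ρ (T_d - T)) := by
    simp only [hS, ContinuousLinearMap.sub_apply, ContinuousLinearMap.one_apply]
    abel
  have htri : ‖S (δ T_d) - ∫ τ in T_a..T_d, g2 τ‖
      ≤ ‖ε T_d + ρ (T_d - T) + δ T_d‖
        + ‖(ε T_d + H (δ T_d) + H (ρ (T_d - T))) + ∫ τ in T_a..T_d, g2 τ‖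
        + ‖S (ρ (T_d - T))‖ := by
    rw [keyeq]
    exact (norm_sub_le _ _).trans (add_le_add_left (norm_sub_le _ _) _)
  have hdetect' : ‖S (δ T_d) - ∫ τ in T_a..T_d, g2 τ‖ > 2 * rbar T_d := hdetect
  have := hrbar T_d
  linarith
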